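/- arXiv:1904.04955 — 2 statements merged into one kernel-verified Lean document; each statement's English description precedes it below -/
import Mathlib

section
/- Let α, β be coprime integers with 0 < β < α, and let α/β = [b_1, ..., b_r] and α/(α−β) = [a_1, ..., a_n] be negative continued fraction expansions with all entries at least 2. Then the Riemenschneider duality holds: n = (sum over i of (b_i − 1)) − r + 1 and r = (sum over j of (a_j − 1)) − n + 1. -/
/-- Negative (Hirzebruch–Jung) continued fraction:
`[b] = b`, `[b₁,...,b_r] = b₁ - 1/[b₂,...,b_r]`. -/
def ncf : List ℤ → ℚ
  | [] => 0
  | b :: l => if l = [] then (b : ℚ) else (b : ℚ) - 1 / ncf l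

lemma ncf_single (b : ℤ) : ncf [b] = b := by simp [ncf]

lemma ncf_cons (b : ℤ) (l : List ℤ) (h : l ≠ []) :
    ncf (b :: l) = (b : ℚ) - 1 / ncf l := by simp [ncf, h]

lemma ncf_gt_one : ∀ (B : List ℤ), B ≠ [] → (∀ x ∈ B, 2 ≤ x) → 1 < ncf B := by
  intro B
  induction B with
  | nil => simp
  | cons b l ih =>
    intro _ h2
    have hb : 2 ≤ b := h2 b (by simp)
    cases l with
    | nil => rw [ncf_single]; exact_mod_cast hb
    | cons c m =>
      have hy : 1 < ncf (c :: m) := ih (by simp) (fun x hx => h2 x (by simp [hx]))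
      rw [ncf_cons _ _ (by simp)]
      have h1 : 1 / ncf (c :: m) < 1 := by
        rw [div_lt_one (by linarith)]; linarith
      have : (2 : ℚ) ≤ b := by exact_mod_cast hb
      linarith

lemma ncf_cons_succ (a : ℤ) (m : List ℤ) : ncf ((a + 1) :: m) = ncf (a :: m) + 1 := by
  cases m with
  | nil => simp [ncf]
  | cons c m' =>
    rw [ncf_cons (a + 1) (c :: m') (by simp), ncf_cons a (c :: m') (by simp)]
    push_cast; ring

lemma ncf_head_lt (b : ℤ) (l : List ℤ) (hl : l ≠ []) (h2 : ∀ x ∈ l, 2 ≤ x) :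
    (b : ℚ) - 1 < ncf (b :: l) ∧ ncf (b :: l) < b := by
  have hy := ncf_gt_one l hl h2
  rw [ncf_cons _ _ hl]
  have h0 : 0 < ncf l := by linarith
  have h1 : 1 / ncf l < 1 := by rw [div_lt_one h0]; linarith
  have h2' : 0 < 1 / ncf l := by positivity
  constructor <;> linarith

lemma ncf_inj : ∀ (B A : List ℤ), B ≠ [] → A ≠ [] → (∀ x ∈ B, 2 ≤ x) →
    (∀ x ∈ A, 2 ≤ x) → ncf B = ncf A → B = A := by
  intro B
  induction B with
  | nil => simp
  | cons b l ih =>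
    intro A _ hA h2B h2A hval
    cases A with
    | nil => exact absurd rfl hA
    | cons a m =>
      have h2l : ∀ x ∈ l, 2 ≤ x := fun x hx => h2B x (by simp [hx])
      have h2m : ∀ x ∈ m, 2 ≤ x := fun x hx => h2A x (by simp [hx])
      -- bounds for both heads
      have hBb : (b : ℚ) - 1 < ncf (b :: l) ∧ ncf (b :: l) ≤ b := by
        cases l with
        | nil =>
          rw [ncf_single]
          have : (2:ℤ) ≤ b := h2B b (by simp)
          constructor
          · linarith
          · exact le_rfl
        | cons c m' =>
          have := ncf_head_lt b (c :: m') (by simp) h2l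
          exact ⟨this.1, le_of_lt this.2⟩
      have hAa : (a : ℚ) - 1 < ncf (a :: m) ∧ ncf (a :: m) ≤ a := by
        cases m with
        | nil =>
          rw [ncf_single]
          have : (2:ℤ) ≤ a := h2A a (by simp)
          constructor
          · linarith
          · exact le_rfl
        | cons c m' =>
          have := ncf_head_lt a (c :: m') (by simp) h2m
          exact ⟨this.1, le_of_lt this.2⟩
      have hba : b = a := by
        have h1 : (b : ℚ) - 1 < a := lt_of_lt_of_le (hval ▸ hBb.1) hAa.2
        have h2 : (a : ℚ) - 1 < b := lt_of_lt_of_le (hval ▸ hAa.1) hBb.2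
        have h1' : b - 1 < a := by exact_mod_cast h1
        have h2' : a - 1 < b := by exact_mod_cast h2
        omega
      subst hba
      cases l with
      | nil =>
        cases m with
        | nil => rfl
        | cons c m' =>
          exfalso
          have := (ncf_head_lt b (c :: m') (by simp) h2m).2
          rw [← hval, ncf_single] at this
          exact lt_irrefl _ this
      | cons c l' =>
        cases m with
        | nil =>
          exfalso
          have := (ncf_head_lt b (c :: l') (by simp) h2l).2
          rw [hval, ncf_single] at this
          exact lt_irrefl _ this
        | cons d m' =>
          have hl : (c :: l') ≠ [] := by simp
          have hm : (d :: m') ≠ [] := by simp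
          rw [ncf_cons _ _ hl, ncf_cons _ _ hm] at hval
          have h1 : 1 / ncf (c :: l') = 1 / ncf (d :: m') := by linarith
          have hyl : 1 < ncf (c :: l') := ncf_gt_one _ hl h2l
          have hym : 1 < ncf (d :: m') := ncf_gt_one _ hm h2m
          have heq : ncf (c :: l') = ncf (d :: m') := by
            field_simp at h1
            exact h1.symm
          rw [ih (d :: m') hl hm h2l h2m heq]

def msum : List ℤ → ℕ
  | [] => 0
  | b :: l => b.toNat + msum l

def dualF : ℕ → List ℤ → List ℤ
  | 0, _ => []
  | _ + 1, [] => []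
  | n + 1, b :: l =>
    if b = 2 then
      if l = [] then [2]
      else
        match dualF n l with
        | [] => []
        | a :: m => (a + 1) :: m
    else 2 :: dualF n ((b - 1) :: l)

lemma key1 (y : ℚ) (hy : 1 < y) : y / (y - 1) + 1 = (2 - 1 / y) / ((2 - 1 / y) - 1) := by
  have h0 : y ≠ 0 := by positivity
  have h1 : y - 1 ≠ 0 := by intro h; nlinarith
  have e1 : (2 - 1 / y) - 1 = (y - 1) / y := by field_simp; ring
  have h2 : (y - 1) / y ≠ 0 := div_ne_zero h1 h0
  rw [e1, div_div_eq_mul_div]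
  field_simp
  ring
lemma key2 (y : ℚ) (hy : 1 < y) : 2 - 1 / (y / (y - 1)) = (y + 1) / ((y + 1) - 1) := by
  have h0 : y ≠ 0 := by positivity
  have h1 : y - 1 ≠ 0 := by intro h; nlinarith
  rw [one_div_div]
  field_simp
  ring_nf
  field_simp

lemma dual_spec : ∀ (n : ℕ) (B : List ℤ), B ≠ [] → (∀ x ∈ B, 2 ≤ x) → msum B ≤ n →
    dualF n B ≠ [] ∧ (∀ x ∈ dualF n B, 2 ≤ x) ∧
    ncf (dualF n B) = ncf B / (ncf B - 1) ∧
    ((dualF n B).length : ℤ) = ((B.map (fun b => b - 1)).sum - B.length + 1) ∧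
    (B.length : ℤ) = ((dualF n B).map (fun a => a - 1)).sum - (dualF n B).length + 1 := by
  intro n
  induction n with
  | zero =>
    intro B hne h2 hm
    exfalso
    cases B with
    | nil => exact hne rfl
    | cons b l =>
      have hb : 2 ≤ b := h2 b (by simp)
      have : msum (b :: l) = b.toNat + msum l := rfl
      omega
  | succ n ih =>
    intro B hne h2 hm
    cases B with
    | nil => exact absurd rfl hne
    | cons b l =>
      have hb : 2 ≤ b := h2 b (by simp)
      have hms : msum (b :: l) = b.toNat + msum l := rfl
      by_cases hb2 : b = 2
      · subst hb2
        by_cases hl : l = []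
        · subst hl
          have hst : dualF (n + 1) ([2] : List ℤ) = [2] := by simp [dualF]
          rw [hst]
          refine ⟨by simp, by simp, ?_, by simp, by simp⟩
          rw [ncf_single]
          norm_num
        · -- b = 2, l ≠ []
          have h2l : ∀ x ∈ l, 2 ≤ x := fun x hx => h2 x (by simp [hx])
          have hml : msum l ≤ n := by omega
          obtain ⟨hDne, hD2, hDval, hDlen1, hDlen2⟩ := ih l hl h2l hml
          obtain ⟨a, m, hDeq⟩ : ∃ a m, dualF n l = a :: m := by
            cases hD : dualF n l with
            | nil => exact absurd hD hDne
            | cons a m => exact ⟨a, m, rfl⟩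
          have hstep : dualF (n + 1) (2 :: l) = (a + 1) :: m := by
            simp [dualF, hl, hDeq]
          rw [hstep]
          rw [hDeq] at hD2 hDval hDlen1 hDlen2
          have ha2 : 2 ≤ a := hD2 a (by simp)
          have hy : 1 < ncf l := ncf_gt_one l hl h2l
          refine ⟨by simp, ?_, ?_, ?_, ?_⟩
          · intro x hx
            rcases List.mem_cons.mp hx with h | h
            · omega
            · exact hD2 x (by simp [h])
          · rw [ncf_cons_succ, hDval, ncf_cons _ _ hl]
            push_cast
            exact key1 (ncf l) hy
          · simp only [List.map_cons, List.sum_cons, List.length_cons] at hDlen1 ⊢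
            push_cast at hDlen1 ⊢
            linarith
          · simp only [List.map_cons, List.sum_cons, List.length_cons] at hDlen2 ⊢
            push_cast at hDlen2 ⊢
            linarith
      · -- b ≥ 3
        have hb3 : 3 ≤ b := by omega
        have h2l : ∀ x ∈ l, 2 ≤ x := fun x hx => h2 x (by simp [hx])
        have h2' : ∀ x ∈ (b - 1) :: l, 2 ≤ x := by
          intro x hx
          rcases List.mem_cons.mp hx with h | h
          · omega
          · exact h2l x h
        have hm' : msum ((b - 1) :: l) ≤ n := by
          have : msum ((b - 1) :: l) = (b - 1).toNat + msum l := rfl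
          omega
        obtain ⟨hDne, hD2, hDval, hDlen1, hDlen2⟩ := ih ((b - 1) :: l) (by simp) h2' hm'
        have hstep : dualF (n + 1) (b :: l) = 2 :: dualF n ((b - 1) :: l) := by
          simp [dualF, hb2]
        rw [hstep]
        have hy : 1 < ncf ((b - 1) :: l) := ncf_gt_one _ (by simp) h2'
        have hx : ncf (b :: l) = ncf ((b - 1) :: l) + 1 := by
          have := ncf_cons_succ (b - 1) l
          rw [show b - 1 + 1 = b by ring] at this
          exact this
        have hz : 1 < ncf (dualF n ((b - 1) :: l)) := ncf_gt_one _ hDne hD2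
        refine ⟨by simp, ?_, ?_, ?_, ?_⟩
        · intro x hx'
          rcases List.mem_cons.mp hx' with h | h
          · omega
          · exact hD2 x h
        · rw [ncf_cons _ _ hDne, hDval, hx]
          push_cast
          exact key2 _ hy
        · simp only [List.map_cons, List.sum_cons, List.length_cons] at hDlen1 ⊢
          push_cast at hDlen1 ⊢
          linarith
        · simp only [List.map_cons, List.sum_cons, List.length_cons] at hDlen2 ⊢
          push_cast at hDlen2 ⊢
          linarith


/-- Riemenschneider duality for dual negative continued fraction expansions of
`α/β` and `α/(α-β)`: `n = Σ(bᵢ-1) - r + 1` and `r = Σ(aⱼ-1) - n + 1`. -/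
theorem riemenschneider_duality (α β : ℤ) (hβ : 0 < β) (hβα : β < α)
    (hcop : Int.gcd α β = 1)
    (B A : List ℤ) (hBne : B ≠ []) (hAne : A ≠ [])
    (hB2 : ∀ x ∈ B, 2 ≤ x) (hA2 : ∀ x ∈ A, 2 ≤ x)
    (hB : ncf B = (α : ℚ) / (β : ℚ))
    (hA : ncf A = (α : ℚ) / ((α : ℚ) - (β : ℚ))) :
    (A.length : ℤ) = (B.map (fun b => b - 1)).sum - B.length + 1 ∧
    (B.length : ℤ) = (A.map (fun a => a - 1)).sum - A.length + 1 := by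
  obtain ⟨hDne, hD2, hDval, hDlen1, hDlen2⟩ := dual_spec (msum B) B hBne hB2 le_rfl
  have hβ0 : (β : ℚ) ≠ 0 := by exact_mod_cast hβ.ne'
  have hαβ : (α : ℚ) - β ≠ 0 := by
    have : (β : ℚ) < α := by exact_mod_cast hβα
    intro h; linarith
  have hval2 : ncf (dualF (msum B) B) = ncf A := by
    rw [hDval, hB, hA, show (α:ℚ)/β - 1 = ((α:ℚ)-β)/β by field_simp,
      div_div_div_cancel_right₀ _ _ _]
    exact hβ0
  have hAD : A = dualF (msum B) B :=
    ncf_inj A (dualF (msum B) B) hAne hDne hA2 hD2 hval2.symm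
  rw [hAD]
  exact ⟨hDlen1, hDlen2⟩
end

section
/- Let Γ be the star-shaped graph with a central vertex of weight −b with b ≥ 3 and three arms, where arm i is a linear chain with weights −b_{i1}, ..., −b_{ir_i}, all b_{ij} ≥ 2. Then the intersection matrix of Γ (diagonal entries the weights, off-diagonal entries 1 for adjacent vertices and 0 otherwise) is negative definite. -/
open Finset Matrix


/-- Intersection matrix (over `ℚ`) of the star-shaped graph with a central vertex of
weight `-b` and three arms, where arm `i` is a linear chain of `r i` vertices with
weights `-(w i 0), ..., -(w i (r i - 1))`. Diagonal entries are the weights; entry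
`(v, u)` is `1` if `v` and `u` are adjacent and `0` otherwise. -/
def starMatrix (b : ℤ) (r : Fin 3 → ℕ) (w : (i : Fin 3) → Fin (r i) → ℤ) :
    Matrix (Option ((i : Fin 3) × Fin (r i))) (Option ((i : Fin 3) × Fin (r i))) ℚ :=
  fun v u =>
    match v, u with
    | none, none => -(b : ℚ)
    | none, some ⟨_, j⟩ => if (j : ℕ) = 0 then 1 else 0
    | some ⟨_, j⟩, none => if (j : ℕ) = 0 then 1 else 0
    | some ⟨i, j⟩, some ⟨i', j'⟩ =>
        if i = i' then
          (if (j : ℕ) = (j' : ℕ) then -((w i j : ℤ) : ℚ)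
           else if (j : ℕ) + 1 = (j' : ℕ) ∨ (j' : ℕ) + 1 = (j : ℕ) then 1 else 0)
        else 0

def lam0 : ℕ → (ℕ → ℚ) → ℚ
  | 0, _ => 0
  | n + 1, W => W 0 - 1 / lam0 n (fun k => W (k + 1))

lemma lam0_gt_one : ∀ (n : ℕ) (W : ℕ → ℚ), 0 < n → (∀ k < n, 2 ≤ W k) → 1 < lam0 n W := by
  intro n
  induction n with
  | zero => omega
  | succ n ih =>
    intro W _ hW
    have h2 : 2 ≤ W 0 := hW 0 (by omega)
    show 1 < W 0 - 1 / lam0 n (fun k => W (k + 1))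
    rcases Nat.eq_zero_or_pos n with h | h
    · subst h; simp [lam0]; linarith
    · have h1 : 1 < lam0 n (fun k => W (k + 1)) := ih _ h (fun k hk => hW (k + 1) (by omega))
      have h0 : 0 < 1 / lam0 n (fun k => W (k + 1)) := by positivity
      have h3 : 1 / lam0 n (fun k => W (k + 1)) < 1 := by
        rw [div_lt_one (by linarith)]; linarith
      linarith

def Pform (n : ℕ) (t : ℚ) (y W : ℕ → ℚ) : ℚ :=
  (∑ j ∈ Finset.range n, W j * y j ^ 2) - 2 * t * y 0
    - 2 * ∑ j ∈ Finset.range (n - 1), y j * y (j + 1)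

lemma Pform_succ (n : ℕ) (hn : 0 < n) (t : ℚ) (y W : ℕ → ℚ) :
    Pform (n + 1) t y W
      = W 0 * y 0 ^ 2 - 2 * t * y 0
        + Pform n (y 0) (fun k => y (k + 1)) (fun k => W (k + 1)) := by
  unfold Pform
  obtain ⟨m, rfl⟩ : ∃ m, n = m + 1 := ⟨n - 1, by omega⟩
  rw [Finset.sum_range_succ' (fun j => W j * y j ^ 2),
    show m + 1 + 1 - 1 = m + 1 by omega,
    Finset.sum_range_succ' (fun j => y j * y (j + 1)),
    show m + 1 - 1 = m by omega]
  ring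

lemma Pform_ge : ∀ (n : ℕ), 0 < n → ∀ (W : ℕ → ℚ), (∀ k < n, 2 ≤ W k) → ∀ (t : ℚ) (y : ℕ → ℚ),
    -(t ^ 2 / lam0 n W) ≤ Pform n t y W := by
  intro n
  induction n with
  | zero => omega
  | succ n ih =>
    intro _ W hW t y
    have h2 : 2 ≤ W 0 := hW 0 (by omega)
    rcases Nat.eq_zero_or_pos n with h | h
    · subst h
      show _ ≤ Pform 1 t y W
      have : Pform 1 t y W = W 0 * y 0 ^ 2 - 2 * t * y 0 := by
        unfold Pform; simp
      rw [this]
      have hl : lam0 1 W = W 0 := by simp [lam0]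
      rw [hl, neg_le, ← sub_nonneg]
      have h0 : (0:ℚ) < W 0 := by linarith
      have : t ^ 2 / W 0 - -(W 0 * y 0 ^ 2 - 2 * t * y 0) = (W 0 * y 0 - t)^2 / W 0 := by
        field_simp; ring
      rw [this]; positivity
    · have h1 : 1 < lam0 n (fun k => W (k + 1)) :=
        lam0_gt_one n _ h (fun k hk => hW (k + 1) (by omega))
      have key := ih h (fun k => W (k + 1)) (fun k hk => hW (k + 1) (by omega)) (y 0)
        (fun k => y (k + 1))
      rw [Pform_succ n h]
      set L' := lam0 n (fun k => W (k + 1)) with hL'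
      have hLdef : lam0 (n + 1) W = W 0 - 1 / L' := rfl
      have hu0 : 0 < 1 / L' := by positivity
      have hu1 : 1 / L' < 1 := by rw [div_lt_one (by linarith)]; linarith
      have hkey : -(y 0 ^ 2 * (1 / L')) ≤ Pform n (y 0) (fun k => y (k + 1)) (fun k => W (k + 1)) := by
        have : y 0 ^ 2 / L' = y 0 ^ 2 * (1 / L') := by ring
        linarith [key, this ▸ key]
      set L := lam0 (n + 1) W with hL
      have hLpos : (0:ℚ) < L := by rw [hLdef]; linarith
      have main : -(t ^ 2 / L) ≤ L * y 0 ^ 2 - 2 * t * y 0 := by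
        rw [neg_le, ← sub_nonneg]
        have : t ^ 2 / L - -(L * y 0 ^ 2 - 2 * t * y 0) = (L * y 0 - t)^2 / L := by
          field_simp; ring
        rw [this]; positivity
      have : L * y 0 ^ 2 = W 0 * y 0 ^ 2 - y 0 ^ 2 * (1 / L') := by rw [hLdef]; ring
      linarith

lemma Pform_pos : ∀ (n : ℕ), 0 < n → ∀ (W : ℕ → ℚ), (∀ k < n, 2 ≤ W k) → ∀ (y : ℕ → ℚ),
    (∃ k < n, y k ≠ 0) → 0 < Pform n 0 y W := by
  intro n
  induction n with
  | zero => omega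
  | succ n ih =>
    intro _ W hW y hy
    have h2 : 2 ≤ W 0 := hW 0 (by omega)
    rcases Nat.eq_zero_or_pos n with h | h
    · subst h
      obtain ⟨k, hk, hyk⟩ := hy
      interval_cases k
      have : Pform 1 0 y W = W 0 * y 0 ^ 2 - 2 * 0 * y 0 := by unfold Pform; simp
      rw [this]
      have : 0 < y 0 ^ 2 := by positivity
      nlinarith
    · rw [Pform_succ n h]
      have h1 : 1 < lam0 n (fun k => W (k + 1)) :=
        lam0_gt_one n _ h (fun k hk => hW (k + 1) (by omega))
      have key := Pform_ge n h (fun k => W (k + 1)) (fun k hk => hW (k + 1) (by omega)) (y 0)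
        (fun k => y (k + 1))
      by_cases h0 : y 0 = 0
      · have hy' : ∃ k < n, y (k + 1) ≠ 0 := by
          obtain ⟨k, hk, hyk⟩ := hy
          rcases k with _ | k
          · exact absurd h0 hyk
          · exact ⟨k, by omega, hyk⟩
        have hP := ih h (fun k => W (k + 1)) (fun k hk => hW (k + 1) (by omega)) (fun k => y (k + 1)) hy'
        rw [h0]
        nlinarith [hP]
      · have hy0 : 0 < y 0 ^ 2 := by positivity
        have hL' : 0 < lam0 n (fun k => W (k + 1)) := by linarith
        have : y 0 ^ 2 / lam0 n (fun k => W (k + 1)) < y 0 ^ 2 := by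
          rw [div_lt_iff₀ hL']; nlinarith
        nlinarith [key]

lemma hsum_ite (n c : ℕ) (f : ℕ → ℚ) (h : c < n ∨ f c = 0) :
    ∑ m ∈ range n, (if m = c then f m else 0) = f c := by
  rw [Finset.sum_ite_eq' (range n) c f]
  rcases h with h | h
  · simp [h]
  · split_ifs <;> simp [h]

lemma quad_eq (b : ℤ) (r : Fin 3 → ℕ) (hr : ∀ i, 0 < r i) (w : (i : Fin 3) → Fin (r i) → ℤ)
    (x : Option ((i : Fin 3) × Fin (r i)) → ℚ) :
    x ⬝ᵥ (-(starMatrix b r w)) *ᵥ x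
      = b * x none ^ 2
        + ∑ i : Fin 3, Pform (r i) (x none)
            (fun k => if h : k < r i then x (some ⟨i, ⟨k, h⟩⟩) else 0)
            (fun k => if h : k < r i then ((w i ⟨k, h⟩ : ℤ) : ℚ) else 2) := by
  classical
  set Y : (i : Fin 3) → ℕ → ℚ :=
    fun i k => if h : k < r i then x (some ⟨i, ⟨k, h⟩⟩) else 0 with hY
  set Wq : (i : Fin 3) → ℕ → ℚ :=
    fun i k => if h : k < r i then ((w i ⟨k, h⟩ : ℤ) : ℚ) else 2 with hWq
  set t := x none with ht
  have hYj : ∀ (i : Fin 3) (j : Fin (r i)), x (some ⟨i, j⟩) = Y i (j : ℕ) := by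
    intro i j; simp [hY, j.isLt]
  have hWj : ∀ (i : Fin 3) (j : Fin (r i)), ((w i j : ℤ) : ℚ) = Wq i (j : ℕ) := by
    intro i j; simp [hWq, j.isLt]
  have hYz : ∀ (i : Fin 3) (k : ℕ), r i ≤ k → Y i k = 0 := by
    intro i k hk; simp [hY, Nat.not_lt.mpr hk]
  have hsig : ∀ (f : ((i : Fin 3) × Fin (r i)) → ℚ), (∑ s, f s) = ∑ i, ∑ j, f ⟨i, j⟩ := by
    intro f; rw [← Finset.univ_sigma_univ, Finset.sum_sigma]
  have expand : x ⬝ᵥ (-(starMatrix b r w)) *ᵥ x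
      = ∑ v, x v * ∑ u, (-(starMatrix b r w)) v u * x u := rfl
  rw [expand, Fintype.sum_option]
  simp only [Fintype.sum_option, hsig, Matrix.neg_apply, starMatrix, hYj]
  have hPfix : ∀ i : Fin 3,
      Pform (r i) t (fun k => if h : k < r i then Y i k else 0)
        (fun k => if h : k < r i then ((w i ⟨k, h⟩ : ℤ) : ℚ) else 2)
      = Pform (r i) t (Y i) (Wq i) := by
    intro i
    congr 1
    funext k
    by_cases h : k < r i
    · simp [h]
    · simp [h, hYz i k (by omega)]
  have e1 : ∀ i : Fin 3,
      (∑ j : Fin (r i), (-if (j : ℕ) = 0 then (1:ℚ) else 0) * Y i (j : ℕ)) = -(Y i 0) := by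
    intro i
    rw [Fin.sum_univ_eq_sum_range (fun k => (-if k = 0 then (1:ℚ) else 0) * Y i k) (r i)]
    rw [Finset.sum_congr rfl (fun m _ => show (-if m = 0 then (1:ℚ) else 0) * Y i m
      = (if m = 0 then -(Y i m) else 0) by split_ifs <;> ring)]
    rw [hsum_ite _ _ _ (Or.inl (hr i))]
  have pull : ∀ (i i' : Fin 3) (A B : Fin (r i') → ℚ),
      (∑ j' : Fin (r i'), (-if i = i' then A j' else 0) * B j')
      = (if i = i' then ∑ j' : Fin (r i'), -(A j') * B j' else 0) := by
    intro i i' A B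
    by_cases h : i = i' <;> simp [h]
  have e2 : ∀ (i : Fin 3) (j : Fin (r i)),
      (∑ i' : Fin 3, ∑ j' : Fin (r i'),
        (-if i = i' then (if (j : ℕ) = (j' : ℕ) then -((w i j : ℤ) : ℚ)
            else if (j : ℕ) + 1 = (j' : ℕ) ∨ (j' : ℕ) + 1 = (j : ℕ) then 1 else 0) else 0)
          * Y i' (j' : ℕ))
      = Wq i (j : ℕ) * Y i (j : ℕ) - (if (j : ℕ) = 0 then 0 else Y i ((j : ℕ) - 1))
        - Y i ((j : ℕ) + 1) := by
    intro i j
    simp only [pull]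
    rw [Finset.sum_ite_eq]
    simp only [Finset.mem_univ, if_pos]
    rw [hWj i j]
    rw [Fin.sum_univ_eq_sum_range (fun m => -(if (j : ℕ) = m then -(Wq i (j : ℕ))
      else if (j : ℕ) + 1 = m ∨ m + 1 = (j : ℕ) then 1 else 0) * Y i m) (r i)]
    by_cases hj0 : (j : ℕ) = 0
    · rw [hj0]
      rw [Finset.sum_congr rfl (fun m _ => show
          -(if 0 = m then -(Wq i 0) else if 0 + 1 = m ∨ m + 1 = 0 then 1 else 0) * Y i m
          = (if m = 0 then Wq i 0 * Y i m else 0) + (if m = 1 then -(Y i m) else 0) by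
        split_ifs <;> first | ring1 | (exfalso; (try simp only [or_false] at *); omega))]
      rw [Finset.sum_add_distrib, hsum_ite _ _ _ (Or.inl (hr i)),
        hsum_ite _ _ _ (by
          rcases Nat.lt_or_ge 1 (r i) with h | h
          · exact Or.inl h
          · exact Or.inr (by simp [hYz i 1 h]))]
      rw [if_pos rfl]
      ring
    · rw [Finset.sum_congr rfl (fun m _ => show
          -(if (j : ℕ) = m then -(Wq i (j : ℕ))
              else if (j : ℕ) + 1 = m ∨ m + 1 = (j : ℕ) then 1 else 0) * Y i m
          = ((if m = (j : ℕ) then Wq i (j : ℕ) * Y i m else 0)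
              + (if m = (j : ℕ) + 1 then -(Y i m) else 0))
              + (if m = (j : ℕ) - 1 then -(Y i m) else 0) by
        split_ifs <;> first | ring1 | (exfalso; (try simp only [or_false] at *); omega))]
      rw [Finset.sum_add_distrib, Finset.sum_add_distrib,
        hsum_ite _ _ _ (Or.inl j.isLt),
        hsum_ite _ _ _ (by
          rcases Nat.lt_or_ge ((j : ℕ) + 1) (r i) with h | h
          · exact Or.inl h
          · exact Or.inr (by simp [hYz i _ h])),
        hsum_ite _ _ _ (Or.inl (by have := j.isLt; omega))]
      rw [if_neg hj0]
      ring
  have e3 : ∀ i : Fin 3,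
      (∑ j : Fin (r i), Y i (j : ℕ) * ((-if (j : ℕ) = 0 then (1:ℚ) else 0) * t
        + (Wq i (j : ℕ) * Y i (j : ℕ) - (if (j : ℕ) = 0 then 0 else Y i ((j : ℕ) - 1))
            - Y i ((j : ℕ) + 1))))
      = Pform (r i) t (Y i) (Wq i) + t * Y i 0 := by
    intro i
    rw [Fin.sum_univ_eq_sum_range (fun m => Y i m * ((-if m = 0 then (1:ℚ) else 0) * t
      + (Wq i m * Y i m - (if m = 0 then 0 else Y i (m - 1)) - Y i (m + 1)))) (r i)]
    rw [Finset.sum_congr rfl (fun m _ => show Y i m * ((-if m = 0 then (1:ℚ) else 0) * t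
        + (Wq i m * Y i m - (if m = 0 then 0 else Y i (m - 1)) - Y i (m + 1)))
        = ((Wq i m * Y i m ^ 2 - (if m = 0 then t * Y i m else 0))
            - (if m = 0 then 0 else Y i m * Y i (m - 1))) - Y i m * Y i (m + 1) by
      split_ifs <;> ring)]
    obtain ⟨n, hn⟩ : ∃ n, r i = n + 1 := ⟨r i - 1, by have := hr i; omega⟩
    rw [hn]
    rw [Finset.sum_sub_distrib, Finset.sum_sub_distrib, Finset.sum_sub_distrib]
    rw [hsum_ite _ 0 (fun m => t * Y i m) (Or.inl (by omega))]
    have h3 : ∑ m ∈ range (n + 1), (if m = 0 then 0 else Y i m * Y i (m - 1))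
        = ∑ k ∈ range n, Y i (k + 1) * Y i k := by
      rw [Finset.sum_range_succ' (fun m => if m = 0 then 0 else Y i m * Y i (m - 1))]
      simp
    have h4 : ∑ m ∈ range (n + 1), Y i m * Y i (m + 1)
        = ∑ m ∈ range n, Y i m * Y i (m + 1) := by
      rw [Finset.sum_range_succ]
      simp [hYz i (n + 1) (by omega)]
    rw [h3, h4, Finset.sum_congr rfl (fun k _ => mul_comm (Y i (k + 1)) (Y i k))]
    unfold Pform
    simp only [Nat.add_sub_cancel]
    ring
  have e23 : ∀ i : Fin 3,
      (∑ j : Fin (r i), Y i (j : ℕ) * ((-if (j : ℕ) = 0 then (1:ℚ) else 0) * x none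
        + ∑ i' : Fin 3, ∑ j' : Fin (r i'),
          (-if i = i' then (if (j : ℕ) = (j' : ℕ) then -((w i j : ℤ) : ℚ)
              else if (j : ℕ) + 1 = (j' : ℕ) ∨ (j' : ℕ) + 1 = (j : ℕ) then 1 else 0) else 0)
            * Y i' (j' : ℕ)))
      = Pform (r i) t (Y i) (Wq i) + t * Y i 0 := by
    intro i
    rw [Finset.sum_congr rfl (fun j _ => by rw [e2 i j])]
    exact e3 i
  rw [Finset.sum_congr rfl (fun i _ => e1 i), Finset.sum_congr rfl (fun i _ => e23 i)]
  simp only [hPfix]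
  rw [Finset.sum_add_distrib, ← Finset.mul_sum, Finset.sum_neg_distrib]
  rw [← ht]
  ring

lemma starMatrix_symm (b : ℤ) (r : Fin 3 → ℕ) (w : (i : Fin 3) → Fin (r i) → ℤ)
    (v u : Option ((i : Fin 3) × Fin (r i))) :
    starMatrix b r w u v = starMatrix b r w v u := by
  rcases v with _ | ⟨i, j⟩ <;> rcases u with _ | ⟨i', j'⟩
  · rfl
  · rfl
  · rfl
  · show (if i' = i then _ else 0) = (if i = i' then _ else 0)
    by_cases h : i = i'
    · subst h
      rw [if_pos rfl, if_pos rfl]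
      by_cases hjj : (j : ℕ) = (j' : ℕ)
      · have : j = j' := Fin.ext hjj
        subst this
        rfl
      · rw [if_neg (fun h => hjj h.symm), if_neg hjj]
        have : ((j' : ℕ) + 1 = (j : ℕ) ∨ (j : ℕ) + 1 = (j' : ℕ))
            ↔ ((j : ℕ) + 1 = (j' : ℕ) ∨ (j' : ℕ) + 1 = (j : ℕ)) := by tauto
        rw [if_congr this rfl rfl]
    · rw [if_neg (fun h' => h h'.symm), if_neg h]


/-- The intersection matrix of the star-shaped graph with central weight `-b`, `b ≥ 3`,
and three arms with weights `-b_{ij} ≤ -2`, is negative definite. -/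
theorem starMatrix_negDef (b : ℤ) (hb : 3 ≤ b) (r : Fin 3 → ℕ) (hr : ∀ i, 0 < r i)
    (w : (i : Fin 3) → Fin (r i) → ℤ) (hw : ∀ i j, 2 ≤ w i j) :
    (-(starMatrix b r w)).PosDef := by
  rw [Matrix.posDef_iff_dotProduct_mulVec]
  constructor
  · show (-(starMatrix b r w))ᴴ = _
    ext v u
    simp only [Matrix.conjTranspose_apply, Matrix.neg_apply, star_trivial]
    rw [starMatrix_symm]
  · intro x hx
    have hsx : star x = x := funext fun v => rfl
    rw [hsx, quad_eq b r hr w x]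
    set t := x none with ht
    set Y : (i : Fin 3) → ℕ → ℚ :=
      fun i k => if h : k < r i then x (some ⟨i, ⟨k, h⟩⟩) else 0 with hY
    set Wq : (i : Fin 3) → ℕ → ℚ :=
      fun i k => if h : k < r i then ((w i ⟨k, h⟩ : ℤ) : ℚ) else 2 with hWq
    have hWcond : ∀ i : Fin 3, ∀ k < r i, 2 ≤ Wq i k := by
      intro i k hk
      simp only [hWq, hk, dif_pos]
      exact_mod_cast hw i ⟨k, hk⟩
    by_cases hc : t = 0
    · obtain ⟨v, hv⟩ := Function.ne_iff.mp hx
      rcases v with _ | ⟨i, j⟩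
      · exact absurd hc hv
      · have hYij : Y i (j : ℕ) ≠ 0 := by
          simpa [hY, j.isLt, Fin.eta] using hv
        have hPi : 0 < Pform (r i) 0 (Y i) (Wq i) :=
          Pform_pos (r i) (hr i) (Wq i) (hWcond i) (Y i) ⟨(j : ℕ), j.isLt, hYij⟩
        have hothers : ∀ i' : Fin 3, 0 ≤ Pform (r i') 0 (Y i') (Wq i') := by
          intro i'
          have := Pform_ge (r i') (hr i') (Wq i') (hWcond i') 0 (Y i')
          simpa using this
        have hsum : 0 < ∑ i' : Fin 3, Pform (r i') 0 (Y i') (Wq i') :=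
          Finset.sum_pos' (fun i' _ => hothers i') ⟨i, Finset.mem_univ i, hPi⟩
        rw [hc]
        simpa using hsum
    · have hstep : ∀ i : Fin 3, -(t ^ 2) < Pform (r i) t (Y i) (Wq i) := by
        intro i
        have h1 : 1 < lam0 (r i) (Wq i) := lam0_gt_one (r i) (Wq i) (hr i) (hWcond i)
        have h2 := Pform_ge (r i) (hr i) (Wq i) (hWcond i) t (Y i)
        have ht2 : 0 < t ^ 2 := by positivity
        have : t ^ 2 / lam0 (r i) (Wq i) < t ^ 2 := by
          rw [div_lt_iff₀ (by linarith)]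
          nlinarith
        linarith
      have hsum : ∑ i : Fin 3, -(t ^ 2) < ∑ i : Fin 3, Pform (r i) t (Y i) (Wq i) :=
        Finset.sum_lt_sum_of_nonempty Finset.univ_nonempty (fun i _ => hstep i)
      have hconst : ∑ _i : Fin 3, -(t ^ 2) = -(3 * t ^ 2) := by
        simp [Finset.sum_const, Finset.card_univ]
        try ring
      have hb' : (3 : ℚ) ≤ (b : ℚ) := by exact_mod_cast hb
      have ht2 : 0 < t ^ 2 := by positivity
      rw [hconst] at hsum
      nlinarith
end
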